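/- Let X be a probability space, n a positive integer, k > 0 a real number, and let f : X^n → {0,1} be a k-pseudo-junta. Then the total influence of f satisfies I_f ≤ 2k. -/

import Mathlib

open MeasureTheory

/-- The influence of the `j`-th variable on `f : Xⁿ → {0,1}`:
the probability that resampling the `j`-th coordinate changes the value of `f`. -/
noncomputable def influence {Ω : Type*} [MeasurableSpace Ω] (μ : Measure Ω) (n : ℕ)
    (f : (Fin n → Ω) → Bool) (j : Fin n) : ℝ :=
  (((Measure.pi fun _ : Fin n => μ).prod μ)
    {p : (Fin n → Ω) × Ω | f p.1 ≠ f (Function.update p.1 j p.2)}).toReal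

/-- The total influence `I_f = Σ_j I_f(j)`. -/
noncomputable def totalInfluence {Ω : Type*} [MeasurableSpace Ω] (μ : Measure Ω) (n : ℕ)
    (f : (Fin n → Ω) → Bool) : ℝ :=
  ∑ j : Fin n, influence μ n f j

/-- The discrete σ-algebra on finsets. -/
instance (α : Type*) : MeasurableSpace (Finset α) := ⊤

/-- The σ-algebra on `Option α` induced by `some`. -/
instance (α : Type*) [m : MeasurableSpace α] : MeasurableSpace (Option α) := m.map some

/-- `J_𝒥(x) = ⋃ {S ⊆ [n] : J_S(x_S) = 1}`. -/
noncomputable def juntaUnion {Ω : Type*} {n : ℕ} (J : Finset (Fin n) → ((Fin n → Ω) → Bool))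
    (x : Fin n → Ω) : Finset (Fin n) :=
  Finset.univ.sup fun S : Finset (Fin n) => if J S x = true then S else ∅

/-- `𝔉_𝒥`: the coarsest σ-algebra making `x ↦ (J_𝒥(x), x_{J_𝒥(x)})` measurable. -/
noncomputable def juntaSigma {Ω : Type*} [MeasurableSpace Ω] {n : ℕ}
    (J : Finset (Fin n) → ((Fin n → Ω) → Bool)) : MeasurableSpace (Fin n → Ω) :=
  MeasurableSpace.comap
    (fun x => (juntaUnion J x,
      fun i => if i ∈ juntaUnion J x then some (x i) else (none : Option Ω)))
    inferInstance

/-- `f` is a `k`-pseudo-junta: `f` is measurable with respect to `𝔉_𝒥` for some collection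
`𝒥 = {J_S}` of measurable functions `J_S : X^S → {0,1}` with `∫ |J_𝒥(x)| dx ≤ k`. -/
def IsPseudoJunta {Ω : Type*} [MeasurableSpace Ω] (μ : Measure Ω) (n : ℕ)
    (f : (Fin n → Ω) → Bool) (k : ℝ) : Prop :=
  ∃ J : Finset (Fin n) → ((Fin n → Ω) → Bool),
    (∀ S, Measurable (J S)) ∧
    (∀ S : Finset (Fin n), ∀ x y : Fin n → Ω, (∀ i ∈ S, x i = y i) → J S x = J S y) ∧
    Measurable[juntaSigma J] f ∧
    ∫ x, ((juntaUnion J x).card : ℝ) ∂(Measure.pi fun _ : Fin n => μ) ≤ k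


lemma mem_juntaUnion_iff {Ω : Type*} {n : ℕ} (J : Finset (Fin n) → ((Fin n → Ω) → Bool))
    (x : Fin n → Ω) (j : Fin n) :
    j ∈ juntaUnion J x ↔ ∃ S : Finset (Fin n), J S x = true ∧ j ∈ S := by
  simp only [juntaUnion, Finset.mem_sup, Finset.mem_univ, true_and]
  constructor
  · rintro ⟨S, hS⟩
    by_cases h : J S x = true
    · exact ⟨S, h, by simpa [h] using hS⟩
    · simp [h] at hS
  · rintro ⟨S, h1, h2⟩
    exact ⟨S, by simp [h1, h2]⟩

lemma measurableSet_mem_juntaUnion {Ω : Type*} [MeasurableSpace Ω] {n : ℕ}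
    (J : Finset (Fin n) → ((Fin n → Ω) → Bool)) (hJ : ∀ S, Measurable (J S)) (j : Fin n) :
    MeasurableSet {x : Fin n → Ω | j ∈ juntaUnion J x} := by
  have : {x : Fin n → Ω | j ∈ juntaUnion J x}
      = ⋃ S : Finset (Fin n), {x | J S x = true ∧ j ∈ S} := by
    ext x
    simp [mem_juntaUnion_iff]
  rw [this]
  exact MeasurableSet.iUnion fun S =>
    ((hJ S) (measurableSet_singleton true)).inter (MeasurableSet.const _)

lemma juntaUnion_update_eq {Ω : Type*} {n : ℕ} (J : Finset (Fin n) → ((Fin n → Ω) → Bool))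
    (hJ : ∀ S : Finset (Fin n), ∀ x y : Fin n → Ω, (∀ i ∈ S, x i = y i) → J S x = J S y)
    (x : Fin n → Ω) (j : Fin n) (y : Ω)
    (h1 : j ∉ juntaUnion J x) (h2 : j ∉ juntaUnion J (Function.update x j y)) :
    juntaUnion J (Function.update x j y) = juntaUnion J x := by
  unfold juntaUnion
  apply Finset.sup_congr rfl
  intro S _
  by_cases hjS : j ∈ S
  · have hx : J S x ≠ true := fun h => h1 ((mem_juntaUnion_iff J x j).2 ⟨S, h, hjS⟩)
    have hx' : J S (Function.update x j y) ≠ true := fun h =>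
      h2 ((mem_juntaUnion_iff J _ j).2 ⟨S, h, hjS⟩)
    simp [hx, hx']
  · rw [hJ S (Function.update x j y) x fun i hi =>
      Function.update_of_ne (by rintro rfl; exact hjS hi) _ _]

lemma key_eq {Ω : Type*} [MeasurableSpace Ω] {n : ℕ}
    (J : Finset (Fin n) → ((Fin n → Ω) → Bool))
    (hJ : ∀ S : Finset (Fin n), ∀ x y : Fin n → Ω, (∀ i ∈ S, x i = y i) → J S x = J S y)
    {f : (Fin n → Ω) → Bool} (hf : Measurable[juntaSigma J] f)
    (x : Fin n → Ω) (j : Fin n) (y : Ω)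
    (h1 : j ∉ juntaUnion J x) (h2 : j ∉ juntaUnion J (Function.update x j y)) :
    f (Function.update x j y) = f x := by
  have hJU := juntaUnion_update_eq J hJ x j y h1 h2
  have hΦ : ((juntaUnion J (Function.update x j y),
        fun i => if i ∈ juntaUnion J (Function.update x j y)
          then some (Function.update x j y i) else (none : Option Ω)) :
        Finset (Fin n) × (Fin n → Option Ω))
      = (juntaUnion J x, fun i => if i ∈ juntaUnion J x then some (x i) else none) := by
    simp only [hJU, Prod.mk.injEq, true_and]
    funext i
    by_cases hi : i ∈ juntaUnion J x
    · have hij : i ≠ j := fun h => h1 (h ▸ hi)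
      simp [hi, Function.update_of_ne hij]
    · simp [hi]
  obtain ⟨A, -, hpre⟩ :=
    MeasurableSpace.measurableSet_comap.mp (hf (measurableSet_singleton true))
  have ha := Set.ext_iff.mp hpre (Function.update x j y)
  have hb := Set.ext_iff.mp hpre x
  simp only [Set.mem_preimage, Set.mem_singleton_iff] at ha hb
  have hiff : f (Function.update x j y) = true ↔ f x = true := by
    rw [← ha, ← hb, hΦ]
  cases hc : f (Function.update x j y) <;> cases hd : f x <;> simp_all

lemma map_update_prod {Ω : Type*} [MeasurableSpace Ω] (μ : Measure Ω)
    [IsProbabilityMeasure μ] (n : ℕ) (j : Fin n) :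
    Measure.map (fun p : (Fin n → Ω) × Ω => Function.update p.1 j p.2)
      ((Measure.pi fun _ : Fin n => μ).prod μ) = Measure.pi fun _ : Fin n => μ := by
  symm
  refine Measure.pi_eq fun s hs => ?_
  rw [Measure.map_apply measurable_update' (MeasurableSet.univ_pi hs)]
  have hpre : (fun p : (Fin n → Ω) × Ω => Function.update p.1 j p.2) ⁻¹' Set.pi Set.univ s
      = (Set.pi Set.univ fun i => if i = j then Set.univ else s i) ×ˢ s j := by
    ext ⟨x, y⟩
    simp only [Set.mem_preimage, Set.mem_pi, Set.mem_univ, true_implies, Set.mem_prod,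
      Function.update_apply]
    constructor
    · intro h
      refine ⟨fun i => ?_, by simpa using h j⟩
      by_cases hij : i = j
      · simp [hij]
      · simpa [hij] using h i
    · rintro ⟨h1, h2⟩ i
      by_cases hij : i = j
      · simpa [hij] using h2
      · simpa [hij] using h1 i
  rw [hpre, Measure.prod_prod, Measure.pi_pi]
  rw [← Finset.mul_prod_erase Finset.univ _ (Finset.mem_univ j)]
  rw [← Finset.mul_prod_erase Finset.univ (fun i => μ (s i)) (Finset.mem_univ j)]
  have heq : ∏ x ∈ Finset.univ.erase j, μ (if x = j then Set.univ else s x)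
      = ∏ x ∈ Finset.univ.erase j, μ (s x) :=
    Finset.prod_congr rfl fun i hi => by rw [if_neg (Finset.ne_of_mem_erase hi)]
  rw [heq, if_pos rfl, measure_univ, one_mul, mul_comm]

/-- A `k`-pseudo-junta has total influence at most `2k`. -/
theorem pseudoJunta_totalInfluence_le {Ω : Type*} [MeasurableSpace Ω] (μ : Measure Ω)
    [IsProbabilityMeasure μ] (n : ℕ) (hn : 0 < n) (k : ℝ) (hk : 0 < k)
    (f : (Fin n → Ω) → Bool) (hf : IsPseudoJunta μ n f k) :
    totalInfluence μ n f ≤ 2 * k := by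
  obtain ⟨J, hJmeas, hJdep, hfmeas, hint⟩ := hf
  set π : Measure (Fin n → Ω) := Measure.pi fun _ : Fin n => μ with hπ
  set ν : Measure ((Fin n → Ω) × Ω) := π.prod μ with hν
  have hSmeas : ∀ j : Fin n, MeasurableSet {x : Fin n → Ω | j ∈ juntaUnion J x} :=
    measurableSet_mem_juntaUnion J hJmeas
  have hbound : ∀ j : Fin n,
      influence μ n f j ≤ 2 * (π {x : Fin n → Ω | j ∈ juntaUnion J x}).toReal := by
    intro j
    set Sj : Set (Fin n → Ω) := {x | j ∈ juntaUnion J x} with hSj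
    set A : Set ((Fin n → Ω) × Ω) := Prod.fst ⁻¹' Sj with hA
    set B : Set ((Fin n → Ω) × Ω) :=
      (fun p : (Fin n → Ω) × Ω => Function.update p.1 j p.2) ⁻¹' Sj with hB
    have hsub : {p : (Fin n → Ω) × Ω | f p.1 ≠ f (Function.update p.1 j p.2)} ⊆ A ∪ B := by
      rintro ⟨x, y⟩ hp
      by_contra hc
      try push_neg at hc
      simp only [Set.mem_union, not_or] at hc
      exact hp (key_eq J hJdep hfmeas x j y hc.1 hc.2).symm
    have hνA : ν A = π Sj := by
      have : A = Sj ×ˢ (Set.univ : Set Ω) := by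
        ext ⟨x, y⟩; simp [hA]
      rw [this, hν, Measure.prod_prod, measure_univ, mul_one]
    have hνB : ν B = π Sj := by
      rw [hB, hν, hπ, ← Measure.map_apply measurable_update' (hSmeas j),
        map_update_prod μ n j]
    have hle : ν {p : (Fin n → Ω) × Ω | f p.1 ≠ f (Function.update p.1 j p.2)}
        ≤ ν A + ν B := (measure_mono hsub).trans (measure_union_le A B)
    rw [hνA, hνB] at hle
    have := ENNReal.toReal_le_toReal (measure_ne_top ν _)
      (by exact ENNReal.add_ne_top.2 ⟨measure_ne_top _ _, measure_ne_top _ _⟩) |>.2 hle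
    rw [ENNReal.toReal_add (measure_ne_top _ _) (measure_ne_top _ _)] at this
    calc influence μ n f j
        ≤ (π Sj).toReal + (π Sj).toReal := this
      _ = 2 * (π Sj).toReal := by ring
  have hsum : ∑ j : Fin n, (π {x : Fin n → Ω | j ∈ juntaUnion J x}).toReal
      = ∫ x, ((juntaUnion J x).card : ℝ) ∂π := by
    have h1 : ∀ j : Fin n, (π {x : Fin n → Ω | j ∈ juntaUnion J x}).toReal
        = ∫ x, ({x : Fin n → Ω | j ∈ juntaUnion J x}).indicator (fun _ => (1 : ℝ)) x ∂π :=
      fun j => (integral_indicator_one (hSmeas j)).symm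
    simp_rw [h1]
    rw [← integral_finset_sum Finset.univ fun j _ =>
      (integrable_const (1 : ℝ)).indicator (hSmeas j)]
    refine integral_congr_ae (Filter.Eventually.of_forall fun x => ?_)
    simp only [Set.indicator_apply, Set.mem_setOf_eq]
    rw [Finset.sum_ite_mem]
    rw [Finset.univ_inter, Finset.sum_const, nsmul_eq_mul, mul_one]
  calc totalInfluence μ n f
      ≤ ∑ j : Fin n, 2 * (π {x : Fin n → Ω | j ∈ juntaUnion J x}).toReal :=
        Finset.sum_le_sum fun j _ => hbound j
    _ = 2 * ∑ j : Fin n, (π {x : Fin n → Ω | j ∈ juntaUnion J x}).toReal := by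
        rw [Finset.mul_sum]
    _ = 2 * ∫ x, ((juntaUnion J x).card : ℝ) ∂π := by rw [hsum]
    _ ≤ 2 * k := by linarith [hint]
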